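/- Let P be a string whose SA-interval is the nonempty integer interval {j,...,k}, and let c be a character with c ≠ $ that occurs in BWT[j..k]. Let j' be the smallest index in {j,...,k} with BWT[j'] = c. Then: (a) if j' > j then BWT[j'−1] ≠ c, i.e., j' is the first position of a run of the BWT; (b) LF(j') is the smallest element of the SA-interval of the string cP, and SA[LF(j')] = SA[j'] − 1. -/
import Mathlib


variable {α : Type*} [LinearOrder α]

/-- The suffix `T[p..n]` of a 1-indexed string `T[1..n]`, as a list. -/
def sfx (T : ℕ → α) (n p : ℕ) : List α :=
  (List.range (n + 1 - p)).map (fun d => T (p + d))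

/-- The Burrows–Wheeler transform determined by the text `T`, its suffix array `SA`,
and the end-of-string character `dollar`:  `BWT[i] = T[SA[i]-1]` if `SA[i] > 1`,
and `BWT[i] = $` if `SA[i] = 1`. -/
def bwt (T : ℕ → α) (SA : ℕ → ℕ) (dollar : α) (i : ℕ) : α :=
  if SA i = 1 then dollar else T (SA i - 1)

lemma sfx_cons (T : ℕ → α) (n p : ℕ) (h : p ≤ n) :
    sfx T n p = T p :: sfx T n (p + 1) := by
  unfold sfx
  have h1 : n + 1 - p = (n - p) + 1 := by omega
  have h2 : n + 1 - (p + 1) = n - p := by omega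
  rw [h1, h2, List.range_succ_eq_map, List.map_cons, List.map_map]
  refine congrArg₂ _ (by norm_num) ?_
  refine List.map_congr_left fun d _ => ?_
  simp only [Function.comp_apply]
  congr 1
  omega

/-- Let `{j,...,k}` be the nonempty SA-interval of `P`, let `c ≠ $`
occur in `BWT[j..k]`, and let `j'` be the smallest index in `{j,...,k}` with
`BWT[j'] = c`.  Then (a) if `j' > j` then `BWT[j'-1] ≠ c` (so `j'` is the first
position of a run), and (b) `LF(j') = ISA[SA[j']-1]` is the smallest element of the
SA-interval of `cP`, with `SA[LF(j')] = SA[j'] - 1`. -/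
theorem statement3
    (n : ℕ) (T : ℕ → α) (dollar : α) (SA : ℕ → ℕ)
    -- `T[1..n]` is a string of length `n ≥ 1` ending with `$`,
    -- which is smaller than every other character and occurs only at position `n`
    (hn : 1 ≤ n) (hTn : T n = dollar)
    (hdollar : ∀ p, 1 ≤ p → p < n → dollar < T p)
    -- `SA` is a permutation of `{1,...,n}` sorting the suffixes lexicographically
    (hSAran : ∀ i, 1 ≤ i → i ≤ n → 1 ≤ SA i ∧ SA i ≤ n)
    (hSAsurj : ∀ p, 1 ≤ p → p ≤ n → ∃ i, 1 ≤ i ∧ i ≤ n ∧ SA i = p)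
    (hSAmono : ∀ i j, 1 ≤ i → i < j → j ≤ n → sfx T n (SA i) < sfx T n (SA j))
    -- `ISA` is the inverse permutation of `SA`
    (ISA : ℕ → ℕ)
    (hISA : ∀ i, 1 ≤ i → i ≤ n → ISA (SA i) = i)
    (hISAran : ∀ p, 1 ≤ p → p ≤ n → 1 ≤ ISA p ∧ ISA p ≤ n ∧ SA (ISA p) = p)
    (P : List α) (j k : ℕ) (hjk : j ≤ k)
    -- `{j,...,k}` is the SA-interval of `P` (nonempty since `j ≤ k`)
    (hint : ∀ i, (1 ≤ i ∧ i ≤ n ∧ P <+: sfx T n (SA i)) ↔ (j ≤ i ∧ i ≤ k))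
    (c : α) (hc : c ≠ dollar)
    (j' : ℕ) (hj'1 : j ≤ j') (hj'2 : j' ≤ k) (hj'c : bwt T SA dollar j' = c)
    (hj'min : ∀ i, j ≤ i → i ≤ k → bwt T SA dollar i = c → j' ≤ i) :
    -- (a)
    (j < j' → bwt T SA dollar (j' - 1) ≠ c) ∧
    -- (b)
    1 < SA j' ∧
    (1 ≤ ISA (SA j' - 1) ∧ ISA (SA j' - 1) ≤ n ∧
      (c :: P) <+: sfx T n (SA (ISA (SA j' - 1))) ∧
      (∀ i, 1 ≤ i → i ≤ n → (c :: P) <+: sfx T n (SA i) → ISA (SA j' - 1) ≤ i)) ∧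
    SA (ISA (SA j' - 1)) = SA j' - 1 := by
  -- basic range facts
  have hj : 1 ≤ j ∧ j ≤ n ∧ P <+: sfx T n (SA j) := (hint j).mpr ⟨le_refl j, hjk⟩
  have hk : 1 ≤ k ∧ k ≤ n ∧ P <+: sfx T n (SA k) := (hint k).mpr ⟨hjk, le_refl k⟩
  have hj'n : j' ≤ n := le_trans hj'2 hk.2.1
  have hj'1' : 1 ≤ j' := le_trans hj.1 hj'1
  have hj'P : P <+: sfx T n (SA j') := ((hint j').mpr ⟨hj'1, hj'2⟩).2.2
  -- part (a)
  have parta : j < j' → bwt T SA dollar (j' - 1) ≠ c := by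
    intro hlt heq
    have := hj'min (j' - 1) (by omega) (by omega) heq
    omega
  -- 1 < SA j'
  have hSAj' := hSAran j' hj'1' hj'n
  have hSAj'1 : 1 < SA j' := by
    rcases lt_or_eq_of_le hSAj'.1 with h | h
    · exact h
    · exfalso; apply hc; rw [← hj'c]; unfold bwt; rw [if_pos h.symm]
  -- the position p = SA j' - 1
  set p := SA j' - 1 with hp
  have hp1 : 1 ≤ p := by omega
  have hpn : p ≤ n := by omega
  obtain ⟨hI1, hI2, hI3⟩ := hISAran p hp1 hpn
  -- T p = c
  have hTp : T p = c := by
    rw [← hj'c]; unfold bwt; rw [if_neg (by omega)]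
  -- the suffix at p is c :: suffix at SA j'
  have hpsfx : sfx T n p = c :: sfx T n (SA j') := by
    rw [sfx_cons T n p hpn, hTp]
    congr 2
    omega
  have hpref : (c :: P) <+: sfx T n (SA (ISA p)) := by
    rw [hI3, hpsfx]
    exact List.cons_prefix_cons.mpr ⟨rfl, hj'P⟩
  -- minimality
  have hmin : ∀ i, 1 ≤ i → i ≤ n → (c :: P) <+: sfx T n (SA i) → ISA p ≤ i := by
    intro i hi1 hin hiP
    have hSAi := hSAran i hi1 hin
    -- SA i < n
    have hSAin : SA i < n := by
      rcases lt_or_eq_of_le hSAi.2 with h | h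
      · exact h
      · exfalso
        have hs : sfx T n (SA i) = [dollar] := by
          rw [h, sfx_cons T n n (le_refl n), hTn]
          congr 1
          unfold sfx
          rw [Nat.sub_eq_zero_of_le (by omega)]
          rfl
        rw [hs] at hiP
        exact hc (List.cons_prefix_cons.mp hiP).1
    -- decompose the suffix at SA i
    have hdi : sfx T n (SA i) = T (SA i) :: sfx T n (SA i + 1) :=
      sfx_cons T n (SA i) (le_of_lt hSAin)
    rw [hdi] at hiP
    obtain ⟨hceq, hPpre⟩ := List.cons_prefix_cons.mp hiP
    -- position i₁ = ISA (SA i + 1)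
    obtain ⟨hI1', hI2', hI3'⟩ := hISAran (SA i + 1) (by omega) (by omega)
    set i₁ := ISA (SA i + 1) with hi₁
    have hi₁jk : j ≤ i₁ ∧ i₁ ≤ k := (hint i₁).mp ⟨hI1', hI2', by rw [hI3']; exact hPpre⟩
    have hbwti₁ : bwt T SA dollar i₁ = c := by
      unfold bwt
      rw [if_neg (by omega), hI3']
      simp only [Nat.add_sub_cancel]
      exact hceq.symm
    have hj'i₁ : j' ≤ i₁ := hj'min i₁ hi₁jk.1 hi₁jk.2 hbwti₁
    rcases lt_or_eq_of_le hj'i₁ with hlt | heq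
    · -- strictly larger: compare suffixes
      have hlex : sfx T n (SA j') < sfx T n (SA i₁) := hSAmono j' i₁ hj'1' hlt hI2'
      have hlex2 : sfx T n (SA (ISA p)) < sfx T n (SA i) := by
        rw [hI3, hpsfx, hdi, hceq, hI3'] at *
        exact List.Lex.cons hlex
      by_contra hcon
      push_neg at hcon
      rcases lt_or_eq_of_le (le_of_lt hcon) with h | h
      · exact absurd (hSAmono i (ISA p) hi1 h hI2) (asymm hlex2)
      · rw [h] at hlex2; exact lt_irrefl _ hlex2
    · -- equal: then SA i = p
      have : SA i + 1 = SA j' := by rw [← hI3', ← heq]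
      have hSAip : SA i = p := by omega
      rw [← hSAip, hISA i hi1 hin]
  exact ⟨parta, hSAj'1, ⟨hI1, hI2, hpref, hmin⟩, hI3⟩
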